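/- Let G be k-contractible to a cycle C with witness structure W. If |V(G)| ≥ 5k + 4, then G contains at least k + 4 vertices v such that {v} is a small witness set and d_G(v) = 2. -/

import Mathlib

open SimpleGraph

/-- Contraction of the edge `uv` in `G`: remove `v`, attaching its former
neighbours to `u`. -/
def SimpleGraph.contractEdge {V : Type} (G : SimpleGraph V) (u v : V) :
    SimpleGraph {x : V // x ≠ v} :=
  SimpleGraph.fromRel (fun a b =>
    G.Adj a.1 b.1 ∨ (a.1 = u ∧ G.Adj v b.1) ∨ (b.1 = u ∧ G.Adj v a.1))

/-- `ContractsIn G H n` : `H` is obtained from `G` by exactly `n` edge contractions. -/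
inductive ContractsIn : {V : Type} → SimpleGraph V → {W : Type} → SimpleGraph W → ℕ → Prop
  | iso {V : Type} {G : SimpleGraph V} {W : Type} {H : SimpleGraph W} :
      Nonempty (G ≃g H) → ContractsIn G H 0
  | step {V : Type} {G : SimpleGraph V} (u v : V) (huv : G.Adj u v)
      {W : Type} {H : SimpleGraph W} {n : ℕ} :
      ContractsIn (G.contractEdge u v) H n → ContractsIn G H (n + 1)

/-- `G` is contractible to `H`. -/
def ContractibleTo {V W : Type} (G : SimpleGraph V) (H : SimpleGraph W) : Prop :=
  ∃ n, ContractsIn G H n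

/-- `G` is `k`-contractible to `H` : `H` arises from `G` by at most `k` edge contractions. -/
def KContractible {V W : Type} (G : SimpleGraph V) (H : SimpleGraph W) (k : ℕ) : Prop :=
  ∃ n ≤ k, ContractsIn G H n

/-- An `H`-witness structure of `G`. -/
structure IsWitnessStructure {V W : Type} (G : SimpleGraph V) (H : SimpleGraph W)
    (Wit : W → Set V) : Prop where
  connected : ∀ h, (G.induce (Wit h)).Connected
  adj : ∀ h₁ h₂ : W, h₁ ≠ h₂ →
    (H.Adj h₁ h₂ ↔ ∃ a ∈ Wit h₁, ∃ b ∈ Wit h₂, G.Adj a b)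
  cover : ∀ v : V, ∃ h, v ∈ Wit h
  disjoint : ∀ h₁ h₂ : W, h₁ ≠ h₂ → Disjoint (Wit h₁) (Wit h₂)

/-- `P` is a path graph. -/
def IsPathGraph {W : Type} (P : SimpleGraph W) : Prop :=
  ∃ n, Nonempty (P ≃g SimpleGraph.pathGraph n)

/-- `C` is a cycle graph (on at least 3 vertices). -/
def IsCycleGraph {W : Type} (C : SimpleGraph W) : Prop :=
  ∃ n, 3 ≤ n ∧ Nonempty (C ≃g SimpleGraph.cycleGraph n)

/-- `G` is 2-edge-connected. -/
def TwoEdgeConnected {V : Type} (G : SimpleGraph V) : Prop :=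
  G.Connected ∧ ∀ e ∈ G.edgeSet, (G.deleteEdges {e}).Connected

/-- `G` is 2-connected. -/
def TwoConnected {V : Type} (G : SimpleGraph V) : Prop :=
  G.Connected ∧ 3 ≤ Nat.card V ∧ ∀ v : V, (G.induce {u | u ≠ v}).Connected

/-- `C₁` and `C₂` are (exactly the) two connected components of `G - {x, y}`. -/
def TwoComponents {V : Type} (G : SimpleGraph V) (x y : V) (C₁ C₂ : Set V) : Prop :=
  Disjoint C₁ C₂ ∧ C₁ ∪ C₂ = {v | v ≠ x ∧ v ≠ y} ∧
  C₁.Nonempty ∧ C₂.Nonempty ∧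
  (G.induce C₁).Connected ∧ (G.induce C₂).Connected ∧
  ∀ a ∈ C₁, ∀ b ∈ C₂, ¬ G.Adj a b

/-- `C` is an optimal (longest) cycle to which `G` can be contracted. -/
def OptimalCycle {V W : Type} (G : SimpleGraph V) (C : SimpleGraph W) : Prop :=
  IsCycleGraph C ∧ ContractibleTo G C ∧
  ∀ (W' : Type) (C' : SimpleGraph W'), IsCycleGraph C' → ContractibleTo G C' →
    Nat.card W' ≤ Nat.card W

/-- `G` can be contracted to a path, with `a` in one endpoint witness set and `b` in
the other, using at most `k` edge contractions. -/
def PathContractFixed {V : Type} (G : SimpleGraph V) (a b : V) (k : ℕ) : Prop :=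
  ∃ (n : ℕ) (Wit : Fin (n + 1) → Set V),
    IsWitnessStructure G (SimpleGraph.pathGraph (n + 1)) Wit ∧
    Nat.card V ≤ (n + 1) + k ∧
    ((a ∈ Wit 0 ∧ b ∈ Wit (Fin.last n)) ∨ (a ∈ Wit (Fin.last n) ∧ b ∈ Wit 0))

lemma aux_card_ne {V : Type} [Finite V] (v : V) :
    Nat.card V = Nat.card {x : V // x ≠ v} + 1 := by
  classical
  have e : {x : V // x = v} ⊕ {x : V // ¬ x = v} ≃ V := Equiv.sumCompl _
  have h1 : Nat.card ({x : V // x = v} ⊕ {x : V // ¬ x = v}) = Nat.card V :=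
    Nat.card_congr e
  haveI : Unique {x : V // x = v} := ⟨⟨⟨v, rfl⟩⟩, fun a => Subtype.ext a.2⟩
  rw [Nat.card_sum, Nat.card_unique] at h1
  have h2 : Nat.card {x : V // ¬ x = v} = Nat.card {x : V // x ≠ v} := rfl
  omega

lemma contractsIn_card {V : Type} {G : SimpleGraph V} {W : Type} {H : SimpleGraph W}
    {n : ℕ} (h : ContractsIn G H n) (hV : Finite V) :
    Nat.card V = Nat.card W + n := by
  induction h with
  | iso hiso =>
      obtain ⟨e⟩ := hiso
      simp [Nat.card_congr e.toEquiv]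
  | @step V' G' u v huv W' H' n' hrec ih =>
      haveI : Finite V' := hV
      haveI : Finite {x : V' // x ≠ v} := Subtype.finite
      have h1 := ih this
      have h2 := aux_card_ne v
      omega

/-- If `G` is `k`-contractible to a cycle `C` with witness structure
`Wit` and `|V(G)| ≥ 5k + 4`, then `G` has at least `k + 4` vertices `v` such that `{v}`
is a small witness set and `d_G(v) = 2`. -/
theorem stmt14 {V W : Type} [Finite V] [Finite W] (G : SimpleGraph V)
    (C : SimpleGraph W) (k : ℕ) (hC : IsCycleGraph C) (hk : KContractible G C k)
    (Wit : W → Set V) (hW : IsWitnessStructure G C Wit)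
    (hcard : 5 * k + 4 ≤ Nat.card V) :
    k + 4 ≤ Nat.card {v : V // (∃ h, Wit h = {v}) ∧
      Nat.card (G.neighborSet v) = 2} := by
  classical
  obtain ⟨m, hm3, ⟨e⟩⟩ := hC
  obtain ⟨n, hnk, hcon⟩ := hk
  have hVW : Nat.card V = Nat.card W + n := contractsIn_card hcon ‹Finite V›
  haveI : Fintype V := Fintype.ofFinite V
  haveI : Fintype W := Fintype.ofFinite W
  -- every witness set is nonempty
  have hne : ∀ h, (Wit h).Nonempty := by
    intro h
    obtain ⟨⟨x, hx⟩⟩ := (hW.connected h).nonempty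
    exact ⟨x, hx⟩
  -- every vertex of C has exactly two neighbours
  have hdeg : ∀ h : W, Nat.card (C.neighborSet h) = 2 := by
    intro h
    obtain ⟨m', rfl⟩ : ∃ m', m = m' + 3 := ⟨m - 3, by omega⟩
    have h1 : Nat.card (C.neighborSet h)
        = Nat.card ((cycleGraph (m' + 3)).neighborSet (e h)) :=
      Nat.card_congr (e.mapNeighborSet h)
    rw [h1, Nat.card_coe_set_eq]
    have h2 : (cycleGraph (m' + 3)).neighborSet (e h) = {e h - 1, e h + 1} :=
      cycleGraph_neighborSet (n := m' + 1)
    rw [h2]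
    refine Set.ncard_pair ?_
    intro hcontra
    have hx : e h = e h + 1 + 1 := by
      have hh := congrArg (· + 1) hcontra
      simpa only [sub_add_cancel] using hh
    have h3 : e h + 0 = e h + (1 + 1) := by rw [add_zero, ← add_assoc]; exact hx
    have h4 : (0 : Fin (m' + 3)) = 1 + 1 := add_left_cancel h3
    open Fin.NatCast in
    have h5 : ((2 : ℕ) : Fin (m' + 3)) = 0 := by
      have h6 : ((2 : ℕ) : Fin (m' + 3)) = 1 + 1 := by norm_num
      rw [h6, ← h4]
    rw [Fin.natCast_eq_zero] at h5
    have := Nat.le_of_dvd (by norm_num) h5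
    omega
  -- translate the witness partition to Finsets
  set f : W → Finset V := fun h => (Wit h).toFinset with hf
  have hfne : ∀ h, 1 ≤ (f h).card := by
    intro h
    exact Finset.card_pos.mpr (Set.toFinset_nonempty.mpr (hne h))
  have hdisjf : ∀ h₁ ∈ Finset.univ, ∀ h₂ ∈ (Finset.univ : Finset W), h₁ ≠ h₂ →
      Disjoint (f h₁) (f h₂) := by
    intro h₁ _ h₂ _ hne12
    have := hW.disjoint h₁ h₂ hne12
    simpa [hf, Set.disjoint_toFinset] using this
  have hcover : Finset.univ.biUnion f = Finset.univ := by
    apply Finset.eq_univ_iff_forall.mpr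
    intro v
    obtain ⟨h, hv⟩ := hW.cover v
    exact Finset.mem_biUnion.mpr ⟨h, Finset.mem_univ h, Set.mem_toFinset.mpr hv⟩
  have hsumV : ∑ h, (f h).card = Fintype.card V := by
    rw [← Finset.card_biUnion hdisjf, hcover, Finset.card_univ]
  -- the big witness sets
  set SB : Finset W := Finset.univ.filter (fun h => 2 ≤ (f h).card) with hSB
  have hSBcard : Fintype.card W + SB.card ≤ Fintype.card V := by
    rw [← hsumV]
    calc Fintype.card W + SB.card
        = ∑ h : W, (1 + if h ∈ SB then 1 else 0) := by
          rw [Finset.sum_add_distrib, Finset.sum_const, Finset.card_univ, smul_eq_mul,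
            mul_one, Finset.sum_ite_mem, Finset.univ_inter, Finset.sum_const,
            smul_eq_mul, mul_one]
      _ ≤ ∑ h, (f h).card := by
          apply Finset.sum_le_sum
          intro h _
          by_cases hh : h ∈ SB
          · simp only [hh, if_true]
            have : 2 ≤ (f h).card := (Finset.mem_filter.mp hh).2
            omega
          · simp only [hh, if_false]
            have := hfne h; omega
  -- vertices adjacent in C to a big witness set
  set BAD : Finset W := SB.biUnion (fun h => C.neighborFinset h) with hBAD
  have hdeg' : ∀ h : W, (C.neighborFinset h).card = 2 := by
    intro h
    have hh := hdeg h
    rw [Nat.card_coe_set_eq, Set.ncard_eq_toFinset_card'] at hh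
    rw [neighborFinset_def]
    convert hh using 2
  have hBADcard : BAD.card ≤ 2 * SB.card := by
    calc BAD.card ≤ ∑ h ∈ SB, (C.neighborFinset h).card := Finset.card_biUnion_le
      _ = 2 * SB.card := by
          rw [Finset.sum_congr rfl (fun h _ => hdeg' h), Finset.sum_const, smul_eq_mul]
          ring
  set GOOD : Finset W := Finset.univ \ (SB ∪ BAD) with hGOOD
  have hGOODcard : Fintype.card W ≤ GOOD.card + 3 * SB.card := by
    have h1 : GOOD.card = Fintype.card W - (SB ∪ BAD).card := by
      rw [hGOOD, Finset.card_sdiff_of_subset (Finset.subset_univ _), Finset.card_univ]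
    have h2 : (SB ∪ BAD).card ≤ SB.card + BAD.card := Finset.card_union_le _ _
    omega
  -- extracting singletons
  have hsing : ∀ h' : W, h' ∉ SB → ∃ v, Wit h' = {v} := by
    intro h' hh
    have hc : (f h').card = 1 := by
      have h1 := hfne h'
      have h2 : ¬ 2 ≤ (f h').card := fun hge =>
        hh (Finset.mem_filter.mpr ⟨Finset.mem_univ _, hge⟩)
      omega
    obtain ⟨v, hv⟩ := Finset.card_eq_one.mp hc
    refine ⟨v, ?_⟩
    have h3 := congrArg (fun s : Finset V => (s : Set V)) hv
    simpa [hf, Set.coe_toFinset] using h3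
  -- the key claim
  have key : ∀ h ∈ GOOD, ∃ v : V, Wit h = {v} ∧ Nat.card (G.neighborSet v) = 2 := by
    intro h hhG
    rw [hGOOD, Finset.mem_sdiff, Finset.mem_union] at hhG
    have hh1 : h ∉ SB := fun hx => hhG.2 (Or.inl hx)
    have hh2 : h ∉ BAD := fun hx => hhG.2 (Or.inr hx)
    obtain ⟨v, hv⟩ := hsing h hh1
    obtain ⟨h₁, h₂, hne12, hpair⟩ := Finset.card_eq_two.mp (hdeg' h)
    have hmem1 : h₁ ∈ C.neighborFinset h := by rw [hpair]; simp
    have hmem2 : h₂ ∈ C.neighborFinset h := by rw [hpair]; simp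
    have hadj1 : C.Adj h h₁ := (mem_neighborFinset _ _ _).mp hmem1
    have hadj2 : C.Adj h h₂ := (mem_neighborFinset _ _ _).mp hmem2
    have hnb1 : h₁ ∉ SB := fun hin =>
      hh2 (Finset.mem_biUnion.mpr ⟨h₁, hin, (mem_neighborFinset _ _ _).mpr hadj1.symm⟩)
    have hnb2 : h₂ ∉ SB := fun hin =>
      hh2 (Finset.mem_biUnion.mpr ⟨h₂, hin, (mem_neighborFinset _ _ _).mpr hadj2.symm⟩)
    obtain ⟨a₁, ha₁⟩ := hsing h₁ hnb1
    obtain ⟨a₂, ha₂⟩ := hsing h₂ hnb2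
    have ha12 : a₁ ≠ a₂ := by
      intro hEq
      have hd := hW.disjoint h₁ h₂ hne12
      rw [ha₁, ha₂, ← hEq] at hd
      exact Set.disjoint_left.mp hd rfl rfl
    have hNset : G.neighborSet v = {a₁, a₂} := by
      ext u
      simp only [mem_neighborSet, Set.mem_insert_iff, Set.mem_singleton_iff]
      constructor
      · intro hu
        obtain ⟨h', hu'⟩ := hW.cover u
        have hne' : h ≠ h' := by
          rintro rfl
          rw [hv, Set.mem_singleton_iff] at hu'
          rw [hu'] at hu
          exact G.irrefl hu
        have hCadj : C.Adj h h' := (hW.adj h h' hne').mpr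
          ⟨v, by rw [hv]; rfl, u, hu', hu⟩
        have hmem' : h' ∈ C.neighborFinset h := (mem_neighborFinset _ _ _).mpr hCadj
        rw [hpair] at hmem'
        rcases Finset.mem_insert.mp hmem' with h1' | h2'
        · left
          rw [h1', ha₁, Set.mem_singleton_iff] at hu'
          exact hu'
        · right
          rw [Finset.mem_singleton.mp h2', ha₂, Set.mem_singleton_iff] at hu'
          exact hu'
      · rintro (rfl | rfl)
        · obtain ⟨x, hx, y, hy, hxy⟩ := (hW.adj h h₁ hadj1.ne).mp hadj1
          rw [hv, Set.mem_singleton_iff] at hx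
          rw [ha₁, Set.mem_singleton_iff] at hy
          rw [← hx, ← hy]
          exact hxy
        · obtain ⟨x, hx, y, hy, hxy⟩ := (hW.adj h h₂ hadj2.ne).mp hadj2
          rw [hv, Set.mem_singleton_iff] at hx
          rw [ha₂, Set.mem_singleton_iff] at hy
          rw [← hx, ← hy]
          exact hxy
    refine ⟨v, hv, ?_⟩
    rw [hNset, Nat.card_coe_set_eq]
    exact Set.ncard_pair ha12
  -- injection from GOOD into the target set
  have hinj : Nat.card {h : W // h ∈ GOOD} ≤ Nat.card {v : V // (∃ h, Wit h = {v}) ∧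
      Nat.card (G.neighborSet v) = 2} := by
    apply Nat.card_le_card_of_injective
      (fun hh : {h : W // h ∈ GOOD} =>
        (⟨(key hh.1 hh.2).choose, ⟨hh.1, (key hh.1 hh.2).choose_spec.1⟩,
          (key hh.1 hh.2).choose_spec.2⟩ : {v : V // (∃ h, Wit h = {v}) ∧
            Nat.card (G.neighborSet v) = 2}))
    intro x y hxy
    have h1 := (key x.1 x.2).choose_spec.1
    have h2 := (key y.1 y.2).choose_spec.1
    have hval : (key x.1 x.2).choose = (key y.1 y.2).choose := congrArg Subtype.val hxy
    apply Subtype.ext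
    by_contra hne'
    have hd := hW.disjoint x.1 y.1 hne'
    rw [h1, h2, ← hval] at hd
    exact Set.disjoint_left.mp hd rfl rfl
  have hGOODna : Nat.card {h : W // h ∈ GOOD} = GOOD.card := by
    rw [Nat.card_eq_fintype_card, Fintype.card_coe]
  have hV' : Nat.card V = Fintype.card V := Nat.card_eq_fintype_card
  have hW' : Nat.card W = Fintype.card W := Nat.card_eq_fintype_card
  omega
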